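/- Let (L, R) be a modality in a category E with finite limits. A map u : A → B belongs to L if and only if the base change functor u* : R[B] → R[A] is fully faithful. -/

import Mathlib

/-!
STATEMENT 13: u belongs to L iff the base change functor u* : R[B] -> R[A] is fully faithful.
-/

open CategoryTheory CategoryTheory.Limits

universe w v u

namespace Paper

variable {E : Type u} [Category.{v} E]

/-- `u` is left orthogonal to `f`: every commutative square from `u` to `f` admits a
unique diagonal filler. -/
def Orth {A B X Y : E} (u : A ⟶ B) (f : X ⟶ Y) : Prop :=
  ∀ (x : A ⟶ X) (y : B ⟶ Y), x ≫ f = u ≫ y → ∃! d : B ⟶ X, u ≫ d = x ∧ d ≫ f = y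

/-- A factorization system `(L, R)`: two replete classes of maps with `L` orthogonal to
`R`, such that every map factors as a map in `L` followed by a map in `R`. -/
structure FactorizationSystem (E : Type u) [Category.{v} E] where
  /-- the left class -/
  L : MorphismProperty E
  /-- the right class -/
  R : MorphismProperty E
  replete_L : ∀ ⦃X Y X' Y' : E⦄ (f : X ⟶ Y) (f' : X' ⟶ Y'),
    (Arrow.mk f ≅ Arrow.mk f') → L f → L f'
  replete_R : ∀ ⦃X Y X' Y' : E⦄ (f : X ⟶ Y) (f' : X' ⟶ Y'),
    (Arrow.mk f ≅ Arrow.mk f') → R f → R f'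
  orth : ∀ ⦃A B X Y : E⦄ (u : A ⟶ B) (f : X ⟶ Y), L u → R f → Orth u f
  fac : ∀ ⦃X Y : E⦄ (f : X ⟶ Y), ∃ (Z : E) (l : X ⟶ Z) (r : Z ⟶ Y),
    L l ∧ R r ∧ l ≫ r = f

/-- `P` is stable under base change: any pullback of a map in `P` is in `P`. -/
def StableUnderBaseChange' (P : MorphismProperty E) : Prop :=
  ∀ ⦃W X Y Z : E⦄ (fst : W ⟶ X) (snd : W ⟶ Y) (f : X ⟶ Z) (g : Y ⟶ Z),
    IsPullback fst snd f g → P f → P snd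

end Paper

namespace Paper

universe v₂ u₂
variable {E : Type u} [Category.{v} E]

/-- Identities belong to the right class of any factorization system. -/
lemma R_id (S : FactorizationSystem E) (X : E) : S.R (𝟙 X) := by
  obtain ⟨Z, l, r, hl, hr, hlr⟩ := S.fac (𝟙 X)
  obtain ⟨d, hd, hdu⟩ := S.orth l r hl hr l r rfl
  have h1 : r ≫ l = 𝟙 Z := by
    have e1 := hdu (r ≫ l) ⟨by rw [← Category.assoc, hlr, Category.id_comp],
      by rw [Category.assoc, hlr, Category.comp_id]⟩
    have e2 := hdu (𝟙 Z) ⟨Category.comp_id l, Category.id_comp r⟩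
    rw [e1, e2]
  exact S.replete_R r (𝟙 X)
    (Arrow.isoMk (⟨r, l, h1, hlr⟩ : Z ≅ X) (Iso.refl X) (by simp)) hr

/-- for a modality `(L, R)` in a category with finite limits, a map
`u : A ⟶ B` belongs to `L` if and only if the base change functor `u* : R[B] ⥤ R[A]` is
fully faithful.  Since `R[B]` is a full subcategory of `E/B`, full faithfulness is
expressed pointwise: for all objects `Y, Y'` of `E/B` with structure maps in `R`, the
action of `Over.pullback u` on maps `Y ⟶ Y'` is bijective. -/
theorem mem_L_iff_baseChange_fullyFaithful [HasFiniteLimits E]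
    (S : FactorizationSystem E) (hmod : StableUnderBaseChange' S.L)
    {A B : E} (u : A ⟶ B) :
    S.L u ↔ ∀ (Y Y' : Over B), S.R Y.hom → S.R Y'.hom →
      Function.Bijective (fun φ : Y ⟶ Y' => (Over.pullback u).map φ) := by
  constructor
  · intro hu Y Y' hY hY'
    have hfst : S.L (pullback.fst Y.hom u : pullback Y.hom u ⟶ Y.left) :=
      hmod _ _ u Y.hom (IsPullback.of_hasPullback Y.hom u).flip hu
    have horth := S.orth _ Y'.hom hfst hY'
    constructor
    · intro φ ψ h
      have h' : pullback.fst Y.hom u ≫ φ.left = pullback.fst Y.hom u ≫ ψ.left := by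
        have := congrArg (fun χ : (Over.pullback u).obj Y ⟶ (Over.pullback u).obj Y' =>
          χ.left ≫ pullback.fst Y'.hom u) h
        erw [pullback.lift_fst, pullback.lift_fst] at this
        simpa using this
      obtain ⟨d, _, hdu⟩ := horth (pullback.fst Y.hom u ≫ φ.left) Y.hom
        (by rw [Category.assoc, Over.w φ])
      have e1 := hdu φ.left ⟨rfl, Over.w φ⟩
      have e2 := hdu ψ.left ⟨h'.symm, Over.w ψ⟩
      ext
      rw [e1, e2]
    · intro ψ
      obtain ⟨d, ⟨hd1, hd2⟩, _⟩ := horth (ψ.left ≫ pullback.fst Y'.hom u) Y.hom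
        (by rw [Category.assoc, pullback.condition, ← Category.assoc]
            have : ψ.left ≫ pullback.snd Y'.hom u = pullback.snd Y.hom u := by
              simpa using Over.w ψ
            rw [this, pullback.condition])
      refine ⟨Over.homMk d hd2, ?_⟩
      ext
      dsimp
      apply pullback.hom_ext
      · erw [pullback.lift_fst]
        simpa using hd1
      · erw [pullback.lift_snd]
        simpa using (Over.w ψ).symm
  · intro h
    obtain ⟨C, l, r, hl, hr, hlr⟩ := S.fac u
    -- use surjectivity at Y = mk (𝟙 B), Y' = mk r
    set Y : Over B := Over.mk (𝟙 B)
    set Y' : Over B := Over.mk r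
    have hbij := h Y Y' (R_id S B) hr
    have hw : (pullback.snd Y.hom u ≫ l) ≫ Y'.hom = pullback.snd Y.hom u ≫ u := by
      simp [Y, Y', hlr]
    obtain ⟨φ, hφ⟩ := hbij.2 (Over.homMk
      (pullback.lift (pullback.snd Y.hom u ≫ l) (pullback.snd Y.hom u) hw)
      (by erw [pullback.lift_snd]; simp))
    set s : B ⟶ C := φ.left with hs
    have hsr : s ≫ r = 𝟙 B := Over.w φ
    -- extract u ≫ s = l
    have hleft := congrArg (fun χ : (Over.pullback u).obj Y ⟶ (Over.pullback u).obj Y' =>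
      χ.left ≫ pullback.fst Y'.hom u) hφ
    have hfs : pullback.fst Y.hom u ≫ s = pullback.snd Y.hom u ≫ l := by
      erw [pullback.lift_fst, pullback.lift_fst] at hleft
      simpa [s] using hleft
    have hus : u ≫ s = l := by
      have := congrArg (fun χ => pullback.lift u (𝟙 A)
        (by simp [Y] : u ≫ Y.hom = 𝟙 A ≫ u) ≫ χ) hfs
      erw [pullback.lift_fst_assoc, pullback.lift_snd_assoc] at this
      simpa using this
    -- show r ≫ s = 𝟙 C via orthogonality of l against r
    obtain ⟨d, _, hdu⟩ := S.orth l r hl hr l r rfl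
    have hrs : r ≫ s = 𝟙 C := by
      have e1 := hdu (r ≫ s) ⟨by rw [← Category.assoc, hlr, hus],
        by rw [Category.assoc, hsr, Category.comp_id]⟩
      have e2 := hdu (𝟙 C) ⟨Category.comp_id l, Category.id_comp r⟩
      rw [e1, e2]
    exact S.replete_L l u
      (Arrow.isoMk (Iso.refl A) (⟨r, s, hrs, hsr⟩ : C ≅ B) (by simp [hlr])) hl

end Paper
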